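/- Skew energy of the oriented Kronecker product with a bipartite factor: if S_1 is an m×m skew-symmetric matrix with S_1^T S_1 = k I_m and S_2 is an n×n skew-symmetric matrix with S_2^T S_2 = ℓ I_n, and B is the matrix obtained from S_1 ⊗ S_2 by the bipartite sign modification making it skew-symmetric, then B^T B = kℓ I_{mn}; hence the oriented graph (H^τ ⊗ G^σ)^o has optimum skew energy mn√(kℓ). -/

import Mathlib

open Matrix Polynomial
open scoped Kronecker

/-- The skew energy: the sum of the norms of the eigenvalues (with multiplicity). -/
noncomputable def skewEnergy {V : Type*} [Fintype V] [DecidableEq V]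
    (S : Matrix V V ℝ) : ℝ :=
  (((S.map Complex.ofReal).charpoly.roots).map (fun z => ‖z‖)).sum

lemma eval_charpoly_aux {N : Type*} [Fintype N] [DecidableEq N] (A : Matrix N N ℂ) (μ : ℂ) :
    (A.charpoly).eval μ = (μ • (1 : Matrix N N ℂ) - A).det := by
  rw [Matrix.charpoly, ← Polynomial.coe_evalRingHom, RingHom.map_det]
  congr 1
  ext i j
  by_cases h : i = j <;>
    simp [Matrix.charmatrix_apply, Matrix.one_apply, Matrix.diagonal_apply, h]

lemma abs_root_of_skew {N : Type*} [Fintype N] [DecidableEq N] (A : Matrix N N ℂ)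
    (hskew : Aᵀ = -A) (c : ℝ) (hc : 0 ≤ c)
    (hA : Aᵀ * A = (c : ℂ) • 1) {μ : ℂ} (hμ : (A.charpoly).IsRoot μ) :
    ‖μ‖ = Real.sqrt c := by
  have hdet : (μ • (1 : Matrix N N ℂ) - A).det = 0 := by
    rw [← eval_charpoly_aux]; exact hμ
  obtain ⟨v, hv0, hv⟩ := (Matrix.exists_mulVec_eq_zero_iff).mpr hdet
  have hAv : A.mulVec v = μ • v := by
    have h := hv
    rw [Matrix.sub_mulVec, Matrix.smul_mulVec, Matrix.one_mulVec, sub_eq_zero] at h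
    exact h.symm
  have h1 : (Aᵀ * A).mulVec v = (c : ℂ) • v := by
    rw [hA, Matrix.smul_mulVec, Matrix.one_mulVec]
  have h2 : (Aᵀ * A).mulVec v = -(μ ^ 2 • v) := by
    rw [hskew, Matrix.neg_mul, Matrix.neg_mulVec, ← Matrix.mulVec_mulVec, hAv,
      Matrix.mulVec_smul, hAv, smul_smul, ← sq]
  have key : ((c : ℂ) + μ ^ 2) • v = 0 := by
    rw [add_smul, h1.symm.trans h2]; abel
  rcases smul_eq_zero.mp key with h | h
  · have hμ2 : μ ^ 2 = -(c : ℂ) := by linear_combination h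
    have habs : (‖μ‖) ^ 2 = c := by
      have := congrArg (‖·‖) hμ2
      simpa [map_pow, norm_pow, norm_neg, Complex.norm_real, Real.norm_eq_abs, abs_of_nonneg hc] using this
    rw [← habs, Real.sqrt_sq (norm_nonneg _)]
  · exact absurd h hv0

lemma map_ofReal_mul {p q r : Type*} [Fintype q] (P : Matrix p q ℝ) (Q : Matrix q r ℝ) :
    (P * Q).map Complex.ofReal = P.map Complex.ofReal * Q.map Complex.ofReal := by
  ext i j
  simp [Matrix.mul_apply, Matrix.map_apply]

/-- Skew energy of the oriented Kronecker product with a bipartite factor: if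
`S₁ = [[0, M], [-Mᵀ, 0]]` (the skew-adjacency matrix of an oriented bipartite graph of
order `m = a + b`) satisfies `S₁ᵀ S₁ = k I` and `S₂` is skew-symmetric of order `n` with
`S₂ᵀ S₂ = ℓ I`, then the sign-modified Kronecker product
`B = [[0, M ⊗ S₂], [-(M ⊗ S₂)ᵀ, 0]]` is skew-symmetric with `Bᵀ B = kℓ I`; hence the
oriented graph `(H^τ ⊗ G^σ)^o` has optimum skew energy `mn √(kℓ)`. -/
theorem kronecker_bipartite_optimum {a b n : ℕ}
    (M : Matrix (Fin a) (Fin b) ℝ) (S₂ : Matrix (Fin n) (Fin n) ℝ) (k ℓ : ℕ)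
    (hS₁ : (Matrix.fromBlocks 0 M (-Mᵀ) 0)ᵀ * Matrix.fromBlocks 0 M (-Mᵀ) 0 =
      (k : ℝ) • (1 : Matrix (Fin a ⊕ Fin b) (Fin a ⊕ Fin b) ℝ))
    (hS₂skew : S₂ᵀ = -S₂)
    (hS₂ : S₂ᵀ * S₂ = (ℓ : ℝ) • (1 : Matrix (Fin n) (Fin n) ℝ)) :
    (Matrix.fromBlocks 0 (M ⊗ₖ S₂) (-(M ⊗ₖ S₂)ᵀ) 0)ᵀ =
      -(Matrix.fromBlocks 0 (M ⊗ₖ S₂) (-(M ⊗ₖ S₂)ᵀ) 0) ∧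
    (Matrix.fromBlocks 0 (M ⊗ₖ S₂) (-(M ⊗ₖ S₂)ᵀ) 0)ᵀ *
        Matrix.fromBlocks 0 (M ⊗ₖ S₂) (-(M ⊗ₖ S₂)ᵀ) 0 =
      ((k * ℓ : ℕ) : ℝ) •
        (1 : Matrix ((Fin a × Fin n) ⊕ (Fin b × Fin n))
          ((Fin a × Fin n) ⊕ (Fin b × Fin n)) ℝ) ∧
    skewEnergy (Matrix.fromBlocks 0 (M ⊗ₖ S₂) (-(M ⊗ₖ S₂)ᵀ) 0) =
      (((a + b) * n : ℕ) : ℝ) * Real.sqrt ((k * ℓ : ℕ) : ℝ) := by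
  set K := M ⊗ₖ S₂ with hK
  set B := Matrix.fromBlocks 0 K (-Kᵀ) 0 with hB
  -- extract block identities from hS₁
  have hexp : (Matrix.fromBlocks 0 M (-Mᵀ) 0)ᵀ * Matrix.fromBlocks 0 M (-Mᵀ) 0 =
      Matrix.fromBlocks (M * Mᵀ) 0 0 (Mᵀ * M) := by
    simp [Matrix.fromBlocks_transpose, Matrix.fromBlocks_multiply, Matrix.neg_mul,
      Matrix.mul_neg]
  rw [hexp] at hS₁
  have hS₁' : Matrix.fromBlocks (M * Mᵀ) 0 0 (Mᵀ * M) =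
      Matrix.fromBlocks ((k : ℝ) • 1) 0 0 ((k : ℝ) • 1) := by
    rw [hS₁, ← Matrix.fromBlocks_one, Matrix.fromBlocks_smul, smul_zero, smul_zero]
  have hMMt : M * Mᵀ = (k : ℝ) • 1 := by
    have := congrArg Matrix.toBlocks₁₁ hS₁'
    simpa [Matrix.toBlocks_fromBlocks₁₁] using this
  have hMtM : Mᵀ * M = (k : ℝ) • 1 := by
    have := congrArg Matrix.toBlocks₂₂ hS₁'
    simpa [Matrix.toBlocks_fromBlocks₂₂] using this
  have hS₂' : S₂ * S₂ᵀ = (ℓ : ℝ) • 1 := by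
    rw [hS₂skew, Matrix.mul_neg, ← Matrix.neg_mul, ← hS₂skew, hS₂]
  -- Kronecker identities
  have hKt : Kᵀ = Mᵀ ⊗ₖ S₂ᵀ := by
    rw [hK]; exact Matrix.kroneckerMap_transpose _ _ _
  have hKtK : Kᵀ * K = ((k * ℓ : ℕ) : ℝ) • 1 := by
    rw [hKt, hK, ← Matrix.mul_kronecker_mul, hMtM, hS₂, Matrix.smul_kronecker,
      Matrix.kronecker_smul, Matrix.one_kronecker_one, smul_smul]
    push_cast
    ring_nf
  have hKKt : K * Kᵀ = ((k * ℓ : ℕ) : ℝ) • 1 := by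
    rw [hKt, hK, ← Matrix.mul_kronecker_mul, hMMt, hS₂', Matrix.smul_kronecker,
      Matrix.kronecker_smul, Matrix.one_kronecker_one, smul_smul]
    push_cast
    ring_nf
  -- first conjunct
  have hBskew : Bᵀ = -B := by
    rw [hB]
    simp [Matrix.fromBlocks_transpose, Matrix.fromBlocks_neg]
  -- second conjunct
  have hBtB : Bᵀ * B = ((k * ℓ : ℕ) : ℝ) • 1 := by
    rw [hB]
    have h1 : (Matrix.fromBlocks 0 K (-Kᵀ) 0)ᵀ * Matrix.fromBlocks 0 K (-Kᵀ) 0 =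
        Matrix.fromBlocks (K * Kᵀ) 0 0 (Kᵀ * K) := by
      simp [Matrix.fromBlocks_transpose, Matrix.fromBlocks_multiply, Matrix.neg_mul,
        Matrix.mul_neg]
    rw [h1, hKKt, hKtK, ← Matrix.fromBlocks_one, Matrix.fromBlocks_smul, smul_zero, smul_zero]
  refine ⟨hBskew, hBtB, ?_⟩
  -- third conjunct: the skew energy
  set c : ℝ := ((k * ℓ : ℕ) : ℝ) with hc
  have hcnn : 0 ≤ c := by positivity
  set A := B.map Complex.ofReal with hA
  have hAskew : Aᵀ = -A := by
    rw [hA, ← Matrix.transpose_map, hBskew]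
    ext i j
    simp
  have hAtA : Aᵀ * A = (c : ℂ) • 1 := by
    rw [hA, ← Matrix.transpose_map, ← map_ofReal_mul, hBtB]
    ext i j
    by_cases h : i = j <;> simp [Matrix.map_apply, Matrix.one_apply, h]
  have hroots : ∀ z ∈ A.charpoly.roots, ‖z‖ = Real.sqrt c := by
    intro z hz
    have hz' : (A.charpoly).IsRoot z :=
      (Polynomial.mem_roots (Matrix.charpoly_monic A).ne_zero).mp hz
    exact abs_root_of_skew A hAskew c hcnn hAtA hz'
  have hcard : A.charpoly.roots.card =
      Fintype.card ((Fin a × Fin n) ⊕ (Fin b × Fin n)) := by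
    rw [← Matrix.charpoly_natDegree_eq_dim A]
    exact (Polynomial.splits_iff_card_roots.mp (IsAlgClosed.splits _))
  have : skewEnergy B = (A.charpoly.roots.card : ℝ) * Real.sqrt c := by
    rw [skewEnergy, ← hA, Multiset.map_congr rfl hroots, Multiset.map_const',
      Multiset.sum_replicate, nsmul_eq_mul]
  rw [this, hcard]
  congr 1
  simp [Fintype.card_sum, Fintype.card_prod, add_mul]
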